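/- arXiv:0704.3894 — 2 statements merged into one kernel-verified Lean document; each statement's English description precedes it below -/
import Mathlib

section
/- Suppose there exists at least one multi-symplectic alternating k-form on ℝ^n. Then every stable k-form on ℝ^n is multi-symplectic. -/
noncomputable section

open Polynomial

/-- The wedge product `f 0 ∧ ⋯ ∧ f (k-1)` of `k` covectors, as an alternating `k`-form:
`(v₁,…,v_k) ↦ det (f i (v j))`. -/
def covectorWedge {V : Type*} [AddCommGroup V] [Module ℝ V] {k : ℕ}
    (f : Fin k → Module.Dual ℝ V) : V [⋀^Fin k]→ₗ[ℝ] ℝ :=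
  (Matrix.detRowAlternating : (Fin k → ℝ) [⋀^Fin k]→ₗ[ℝ] ℝ).compLinearMap (LinearMap.pi f)

/-- The rank `ρ(γ)` of a `k`-form `γ`: the minimal dimension of a subspace `W ⊆ V*` such that
`γ` lies in the image of `Λ^k W`, i.e. in the span of wedge products of covectors from `W`. -/
def formRank {V : Type*} [AddCommGroup V] [Module ℝ V] {k : ℕ}
    (γ : V [⋀^Fin k]→ₗ[ℝ] ℝ) : ℕ :=
  sInf {d : ℕ | ∃ W : Submodule ℝ (Module.Dual ℝ V), Module.finrank ℝ W = d ∧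
    γ ∈ Submodule.span ℝ
      {φ : V [⋀^Fin k]→ₗ[ℝ] ℝ | ∃ f : Fin k → Module.Dual ℝ V,
        (∀ i, f i ∈ W) ∧ φ = covectorWedge f}}

/-- A `(k+1)`-form `γ` is multi-symplectic if the linear map
`I_γ : v ↦ v ⌟ γ` (insertion in the first slot) is injective. -/
def MultiSymplectic {V : Type*} [AddCommGroup V] [Module ℝ V] {k : ℕ}
    (γ : V [⋀^Fin (k + 1)]→ₗ[ℝ] ℝ) : Prop :=
  Function.Injective fun v => γ.curryLeft v

/-- The natural topology on the finite-dimensional space of alternating `k`-forms on `ℝⁿ`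
(the topology induced by evaluation; it coincides with the standard vector space topology). -/
instance altFormTopology (n k : ℕ) :
    TopologicalSpace ((Fin n → ℝ) [⋀^Fin k]→ₗ[ℝ] ℝ) :=
  TopologicalSpace.induced (fun φ => (⇑φ : (Fin k → Fin n → ℝ) → ℝ)) inferInstance

/-- The pullback `g^*γ` of a `k`-form on `ℝⁿ` by a linear map `g`:
`(g^*γ)(v₁,…,v_k) = γ (g v₁, …, g v_k)`. -/
def formPullback {n k : ℕ} (g : (Fin n → ℝ) →ₗ[ℝ] (Fin n → ℝ))
    (γ : (Fin n → ℝ) [⋀^Fin k]→ₗ[ℝ] ℝ) : (Fin n → ℝ) [⋀^Fin k]→ₗ[ℝ] ℝ :=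
  γ.compLinearMap g

/-- A `k`-form on `ℝⁿ` is stable if its `GL(n,ℝ)`-orbit (under pullback) is open in the
space of all alternating `k`-forms. -/
def IsStableForm {n k : ℕ} (γ : (Fin n → ℝ) [⋀^Fin k]→ₗ[ℝ] ℝ) : Prop :=
  IsOpen {φ : (Fin n → ℝ) [⋀^Fin k]→ₗ[ℝ] ℝ |
    ∃ g : (Fin n → ℝ) ≃ₗ[ℝ] (Fin n → ℝ), φ = formPullback g.toLinearMap γ}

/-- Pullback by an equivalence preserves multi-symplecticity (in one direction). -/
lemma multiSymplectic_of_pullback {n k : ℕ} (g : (Fin n → ℝ) ≃ₗ[ℝ] (Fin n → ℝ))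
    (γ : (Fin n → ℝ) [⋀^Fin (k + 1)]→ₗ[ℝ] ℝ)
    (h : MultiSymplectic (formPullback g.toLinearMap γ)) : MultiSymplectic γ := by
  intro v w hvw
  have h2 : (γ.compLinearMap g.toLinearMap).curryLeft (g.symm v)
      = (γ.compLinearMap g.toLinearMap).curryLeft (g.symm w) := by
    rw [AlternatingMap.curryLeft_compLinearMap, AlternatingMap.curryLeft_compLinearMap]
    simp only [LinearEquiv.coe_coe, LinearEquiv.apply_symm_apply]
    simp only at hvw; rw [hvw]
  have := h h2
  simpa using congrArg g this

/-- If a multi-symplectic form exists on `ℝⁿ`, then every stable form is multi-symplectic. -/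
theorem multiSymplectic_of_isStableForm (n k : ℕ)
    (h : ∃ γ₀ : (Fin n → ℝ) [⋀^Fin (k + 1)]→ₗ[ℝ] ℝ, MultiSymplectic γ₀)
    (γ : (Fin n → ℝ) [⋀^Fin (k + 1)]→ₗ[ℝ] ℝ) (hγ : IsStableForm γ) :
    MultiSymplectic γ := by
  classical
  obtain ⟨γ₀, hγ₀⟩ := h
  set δ := γ₀ - γ with hδ
  -- a left inverse of the injective map v ↦ ιᵥγ₀
  obtain ⟨π, hπ⟩ := LinearMap.exists_leftInverse_of_injective γ₀.curryLeft
    (LinearMap.ker_eq_bot.mpr hγ₀)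
  -- the path of forms
  set c : ℝ → (Fin n → ℝ) [⋀^Fin (k + 1)]→ₗ[ℝ] ℝ := fun t => γ + t • δ with hc
  set A : (Fin n → ℝ) →ₗ[ℝ] (Fin n → ℝ) := π ∘ₗ γ.curryLeft with hA
  set B : (Fin n → ℝ) →ₗ[ℝ] (Fin n → ℝ) := π ∘ₗ δ.curryLeft with hB
  have hE : ∀ t : ℝ, π ∘ₗ (c t).curryLeft = A + t • B := by
    intro t
    simp only [hc, hA, hB]
    rw [AlternatingMap.curryLeft_add, AlternatingMap.curryLeft_smul]
    refine LinearMap.ext fun v => ?_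
    simp
  set b := Pi.basisFun ℝ (Fin n)
  set M := LinearMap.toMatrix b b A with hM
  set N := LinearMap.toMatrix b b B with hN
  set P : ℝ[X] := (Matrix.of fun i j => C (M i j) + X * C (N i j)).det with hP
  have hPe : ∀ t : ℝ, P.eval t = (M + t • N).det := by
    intro t
    have h0 : P.eval t = Polynomial.evalRingHom t P := rfl
    have hmm : (Matrix.of fun i j => C (M i j) + X * C (N i j)).map (evalRingHom t)
        = M + t • N := by
      ext i j
      simp only [Matrix.map_apply, Matrix.of_apply, coe_evalRingHom, eval_add, eval_mul, eval_C,
        eval_X, Matrix.add_apply, Matrix.smul_apply, smul_eq_mul]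
    rw [h0, hP, RingHom.map_det, RingHom.mapMatrix_apply, hmm]
  have hmat : ∀ t : ℝ, M + t • N = LinearMap.toMatrix b b (A + t • B) := by
    intro t; rw [map_add, map_smul]
  -- P(1) = 1
  have hone : A + (1 : ℝ) • B = LinearMap.id := by
    rw [← hE 1]
    have : c 1 = γ₀ := by simp [hc, hδ]
    rw [this]; exact hπ
  have hPne : P ≠ 0 := by
    intro h0
    have h1 : P.eval 1 = 1 := by
      rw [hPe 1, hmat 1, hone]
      simp [LinearMap.toMatrix_id]
    rw [h0] at h1; simp at h1
  -- continuity of the path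
  have hcont : Continuous c := by
    rw [continuous_induced_rng]
    apply continuous_pi
    intro x
    simp only [Function.comp, hc, AlternatingMap.add_apply, AlternatingMap.smul_apply,
      smul_eq_mul]
    fun_prop
  -- the orbit is open and contains c 0 = γ
  set U : Set ℝ := c ⁻¹' {φ | ∃ g : (Fin n → ℝ) ≃ₗ[ℝ] (Fin n → ℝ),
      φ = formPullback g.toLinearMap γ} with hU
  have hUopen : IsOpen U := hγ.preimage hcont
  have hU0 : (0 : ℝ) ∈ U := by
    refine ⟨LinearEquiv.refl ℝ _, ?_⟩
    simp only [hc, zero_smul, add_zero]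
    exact (γ.compLinearMap_id).symm
  -- find t ∈ U with P(t) ≠ 0
  obtain ⟨ε, hε, hball⟩ := Metric.isOpen_iff.mp hUopen 0 hU0
  have hIoo : (Set.Ioo (-ε) ε).Infinite := Set.Ioo_infinite (by linarith)
  have hroots : {t : ℝ | P.IsRoot t}.Finite := P.finite_setOf_isRoot hPne
  obtain ⟨t, htIoo, htroot⟩ := (hIoo.diff hroots).nonempty
  have htU : t ∈ U := by
    apply hball
    rw [Real.ball_eq_Ioo]
    simpa using htIoo
  obtain ⟨g, hg⟩ := htU
  -- c t is multi-symplectic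
  have hinj : MultiSymplectic (c t) := by
    have hdet : (M + t • N).det ≠ 0 := by
      rw [← hPe t]; exact htroot
    have hker : LinearMap.ker (π ∘ₗ (c t).curryLeft) = ⊥ := by
      rw [hE t]
      have : A + t • B = Matrix.toLin b b (M + t • N) := by
        rw [hmat t, Matrix.toLin_toMatrix]
      rw [this]
      exact Matrix.ker_toLin_eq_bot b _ (isUnit_iff_ne_zero.mpr hdet)
    intro v w hvw
    have : (π ∘ₗ (c t).curryLeft) v = (π ∘ₗ (c t).curryLeft) w := by
      simp only [LinearMap.comp_apply]
      simp only at hvw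
      rw [hvw]
    exact LinearMap.ker_eq_bot.mp hker this
  rw [hg] at hinj
  exact multiSymplectic_of_pullback g γ hinj
end
end

section
/- Let n and k be natural numbers with 4 ≤ k and 2k ≤ n. Then no alternating k-form on ℝ^n is stable, i.e., no k-form on ℝ^n has an open GL(n,ℝ)-orbit in the space of alternating k-forms. -/
noncomputable section

/-! ### Auxiliary material -/

lemma choose_big_aux (n k : ℕ) (hk : 4 ≤ k) (hn : 2*k ≤ n) : n^2 < n.choose k := by
  have h8 : 8 ≤ n := by omega
  have h4 : n^2 < n.choose 4 := by
    have hd : n.descFactorial 4 = 24 * n.choose 4 := by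
      rw [Nat.descFactorial_eq_factorial_mul_choose]; norm_num [Nat.factorial]
    have h24 : 24 * n^2 < n.descFactorial 4 := by
      obtain ⟨m, rfl⟩ : ∃ m, n = m + 8 := ⟨n - 8, by omega⟩
      simp only [Nat.descFactorial]
      have e0 : m + 8 - 0 = m + 8 := by omega
      have e1 : m + 8 - 1 = m + 7 := by omega
      have e2 : m + 8 - 2 = m + 6 := by omega
      have e3 : m + 8 - 3 = m + 5 := by omega
      rw [e0, e1, e2, e3]
      ring_nf
      nlinarith [Nat.zero_le m, Nat.zero_le (m*m), Nat.zero_le (m*m*m)]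
    omega
  have mono : ∀ j, 4 ≤ j → 2*j ≤ n → n.choose 4 ≤ n.choose j := by
    intro j
    induction j with
    | zero => omega
    | succ j ih =>
      intro hj hjn
      rcases Nat.lt_or_ge 4 (j+1) with h | h
      · exact (ih (by omega) (by omega)).trans
          (Nat.choose_le_succ_of_lt_half_left (by omega))
      · have : j + 1 = 4 := by omega
        rw [this]
  exact h4.trans_le (mono k hk hn)

/-- Evaluation of a `k`-form on tuples of standard basis vectors, as a linear map. -/
def evalBasisAux (n k : ℕ) : ((Fin n → ℝ) [⋀^Fin k]→ₗ[ℝ] ℝ) →ₗ[ℝ] ((Fin k → Fin n) → ℝ) where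
  toFun φ := fun x => φ (fun i => Pi.single (x i) 1)
  map_add' _ _ := rfl
  map_smul' _ _ := rfl

lemma form_expansion {n k : ℕ} (φ : (Fin n → ℝ) [⋀^Fin k]→ₗ[ℝ] ℝ) (v : Fin k → Fin n → ℝ) :
    φ v = ∑ x : Fin k → Fin n, (∏ i, v i (x i)) * φ (fun i => Pi.single (x i) 1) := by
  have h1 : v = fun i => ∑ j, v i j • (Pi.single j 1 : Fin n → ℝ) := by
    funext i
    have : ∀ j : Fin n, v i j • (Pi.single j 1 : Fin n → ℝ) = Pi.single j (v i j) := fun j => by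
      rw [← Pi.single_smul, smul_eq_mul, mul_one]
    simp only [this, Finset.univ_sum_single]
  calc φ v = φ.toMultilinearMap (fun i => ∑ j, v i j • (Pi.single j 1 : Fin n → ℝ)) := by
            rw [← h1]; rfl
    _ = ∑ x : Fin k → Fin n, φ.toMultilinearMap
          (fun i => v i (x i) • (Pi.single (x i) 1 : Fin n → ℝ)) := by
            rw [MultilinearMap.map_sum]
    _ = _ := by
            refine Finset.sum_congr rfl fun x _ => ?_
            rw [MultilinearMap.map_smul_univ, smul_eq_mul]
            rfl

def wedgeOf {n k : ℕ} (s : Finset (Fin n)) (hs : s.card = k) : (Fin n → ℝ) [⋀^Fin k]→ₗ[ℝ] ℝ :=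
  covectorWedge (fun i => LinearMap.proj ((s.orderIsoOfFin hs i : Fin n)))

lemma wedgeOf_apply {n k : ℕ} (s : Finset (Fin n)) (hs : s.card = k) (v : Fin k → Fin n → ℝ) :
    wedgeOf s hs v = Matrix.det (Matrix.of fun j i => v j ((s.orderIsoOfFin hs i : Fin n))) := by
  rfl

/-- increasing enumeration of a `k`-element subset -/
def enumOf {n k : ℕ} (s : Finset (Fin n)) (hs : s.card = k) : Fin k → Fin n :=
  fun j => (s.orderIsoOfFin hs j : Fin n)

lemma wedgeOf_diag {n k : ℕ} (s : Finset (Fin n)) (hs : s.card = k) :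
    wedgeOf s hs (fun j => Pi.single (enumOf s hs j) 1) = 1 := by
  rw [wedgeOf_apply]
  have : (Matrix.of fun j i => (Pi.single (enumOf s hs j) (1:ℝ) : Fin n → ℝ)
      ((s.orderIsoOfFin hs i : Fin n))) = (1 : Matrix (Fin k) (Fin k) ℝ) := by
    ext j i
    have hinj : Function.Injective (enumOf s hs) := fun a b h => by
      have := (s.orderIsoOfFin hs).injective (Subtype.coe_injective h)
      exact this
    by_cases h : j = i
    · subst h; simp [enumOf, Matrix.one_apply, Pi.single_apply]
    · have h2 : enumOf s hs i ≠ enumOf s hs j := fun hh => h (hinj hh).symm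
      simp [enumOf, Matrix.one_apply, Pi.single_apply, h, h2, Ne.symm h]
  rw [this, Matrix.det_one]

lemma wedgeOf_offdiag {n k : ℕ} (s t : Finset (Fin n)) (hs : s.card = k) (ht : t.card = k)
    (hst : s ≠ t) :
    wedgeOf s hs (fun j => Pi.single (enumOf t ht j) 1) = 0 := by
  rw [wedgeOf_apply]
  have hex : ∃ b ∈ t, b ∉ s := by
    by_contra h
    push_neg at h
    exact hst (Finset.eq_of_subset_of_card_le (fun b hb => h b hb) (by omega)).symm
  obtain ⟨b, hbt, hbs⟩ := hex
  set j := (t.orderIsoOfFin ht).symm ⟨b, hbt⟩ with hj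
  apply Matrix.det_eq_zero_of_row_eq_zero j
  intro i
  have hbj : enumOf t ht j = b := by
    simp [enumOf, hj]
  have hne : (s.orderIsoOfFin hs i : Fin n) ≠ enumOf t ht j := by
    rw [hbj]; rintro rfl; exact hbs (s.orderIsoOfFin hs i).2
  rw [Finset.coe_orderIsoOfFin_apply] at hne
  simp [Matrix.of_apply, Pi.single_apply, hne]

lemma evalBasis_wedge_indep (n k : ℕ) :
    LinearIndependent ℝ (fun s : {s : Finset (Fin n) // s.card = k} =>
      evalBasisAux n k (wedgeOf s.1 s.2)) := by
  rw [Fintype.linearIndependent_iff]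
  intro c hc t
  have h := congrFun hc (enumOf t.1 t.2)
  simp only [Finset.sum_apply, Pi.smul_apply, smul_eq_mul, Pi.zero_apply] at h
  rw [Finset.sum_eq_single t] at h
  · simpa [evalBasisAux, wedgeOf_diag] using h
  · intro s _ hst
    have : evalBasisAux n k (wedgeOf s.1 s.2) (enumOf t.1 t.2) = 0 := by
      simpa [evalBasisAux] using wedgeOf_offdiag s.1 t.1 s.2 t.2 (fun h => hst (Subtype.ext h))
    rw [this, mul_zero]
  · intro h; exact absurd (Finset.mem_univ t) h

lemma finrank_range_evalBasis (n k : ℕ) :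
    n.choose k ≤ Module.finrank ℝ ↥(LinearMap.range (evalBasisAux n k)) := by
  have indep := evalBasis_wedge_indep n k
  set L := LinearMap.range (evalBasisAux n k)
  have : LinearIndependent ℝ (fun s : {s : Finset (Fin n) // s.card = k} =>
      (⟨evalBasisAux n k (wedgeOf s.1 s.2), LinearMap.mem_range_self _ _⟩ : ↥L)) := by
    apply LinearIndependent.of_comp L.subtype
    exact indep
  have hcard := this.fintype_card_le_finrank
  rwa [Fintype.card_finset_len, Fintype.card_fin] at hcard

/-- For `4 ≤ k` and `2k ≤ n`, no alternating `k`-form on `ℝⁿ` is stable. -/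
theorem not_isStableForm_of_four_le (n k : ℕ) (hk : 4 ≤ k) (hn : 2 * k ≤ n)
    (γ : (Fin n → ℝ) [⋀^Fin k]→ₗ[ℝ] ℝ) : ¬ IsStableForm γ := by
  intro hS
  classical
  set Φ := evalBasisAux n k with hΦ
  -- extract an open set from the induced topology
  obtain ⟨O, hO, hOS⟩ := isOpen_induced_iff.mp hS
  -- the continuous "expansion" map E
  set Efun : ((Fin k → Fin n) → ℝ) → ((Fin k → Fin n → ℝ) → ℝ) :=
    fun w v => ∑ x : Fin k → Fin n, (∏ i, v i (x i)) * w x with hEfun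
  have hEcont : Continuous Efun := by
    apply continuous_pi
    intro v
    apply continuous_finset_sum
    intro x _
    exact (continuous_const.mul (continuous_apply x))
  have hfactor : ∀ φ : (Fin n → ℝ) [⋀^Fin k]→ₗ[ℝ] ℝ, (⇑φ : (Fin k → Fin n → ℝ) → ℝ) = Efun (Φ φ) := by
    intro φ
    funext v
    exact form_expansion φ v
  set U : Set ((Fin k → Fin n) → ℝ) := Efun ⁻¹' O with hU
  have hUopen : IsOpen U := hO.preimage hEcont
  have hSU : Φ ⁻¹' U = {φ : (Fin n → ℝ) [⋀^Fin k]→ₗ[ℝ] ℝ |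
      ∃ g : (Fin n → ℝ) ≃ₗ[ℝ] (Fin n → ℝ), φ = formPullback g.toLinearMap γ} := by
    rw [← hOS]
    ext φ
    simp only [Set.mem_preimage, hU, hfactor φ]
  -- γ itself is in the orbit
  have hγS : Φ γ ∈ U := by
    have : γ ∈ (Φ ⁻¹' U) := by
      rw [hSU]
      exact ⟨LinearEquiv.refl ℝ _, by
        ext v
        simp [formPullback]⟩
    exact this
  -- Lower bound on the Hausdorff dimension of U ∩ range Φ
  set L := LinearMap.range Φ with hL
  set A : Set ((Fin k → Fin n) → ℝ) := U ∩ Set.range Φ with hA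
  have hiso : Isometry ((↑) : ↥L → ((Fin k → Fin n) → ℝ)) := fun x y => rfl
  set V : Set ↥L := (Subtype.val) ⁻¹' U with hV
  have hVopen : IsOpen V := hUopen.preimage continuous_subtype_val
  have hγV : (⟨Φ γ, LinearMap.mem_range_self _ _⟩ : ↥L) ∈ V := hγS
  have hAV : Subtype.val '' V = A := by
    ext w
    constructor
    · rintro ⟨⟨w', hw'⟩, hwV, rfl⟩
      exact ⟨hwV, LinearMap.mem_range.mp hw'⟩
    · rintro ⟨hwU, φ, rfl⟩
      exact ⟨⟨Φ φ, LinearMap.mem_range_self _ _⟩, hwU, rfl⟩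
  have hdimA : dimH A = Module.finrank ℝ ↥L := by
    rw [← hAV, hiso.dimH_image]
    exact Real.dimH_of_mem_nhds (hVopen.mem_nhds hγV)
  -- Upper bound: A is contained in the range of a smooth map from matrices
  set Ψ : (Fin n → Fin n → ℝ) → ((Fin k → Fin n) → ℝ) :=
    fun m x' => ∑ x : Fin k → Fin n, (∏ i, m (x i) (x' i)) * Φ γ x with hΨ
  have hΨsmooth : ContDiff ℝ 1 Ψ := by
    apply contDiff_pi.mpr
    intro x'
    apply ContDiff.sum
    intro x _
    apply ContDiff.mul _ contDiff_const
    apply contDiff_prod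
    intro i _
    exact ((contDiff_pi.mp contDiff_id) (x' i)).comp ((contDiff_pi.mp contDiff_id) (x i))
  have hArange : A ⊆ Set.range Ψ := by
    rintro w ⟨hwU, φ, rfl⟩
    have hφ : φ ∈ Φ ⁻¹' U := hwU
    rw [hSU] at hφ
    obtain ⟨g, rfl⟩ := hφ
    refine ⟨fun a b => g.toLinearMap (Pi.single b 1) a, ?_⟩
    funext x'
    rw [hΨ]
    show _ = Φ (formPullback g.toLinearMap γ) x'
    have : Φ (formPullback g.toLinearMap γ) x'
        = γ (fun i => g.toLinearMap (Pi.single (x' i) 1)) := rfl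
    rw [this, form_expansion γ (fun i => g.toLinearMap (Pi.single (x' i) 1))]
    rfl
  have hupper : dimH A ≤ (Module.finrank ℝ (Fin n → Fin n → ℝ) : ENNReal) :=
    (dimH_mono hArange).trans hΨsmooth.dimH_range_le
  have hfr : Module.finrank ℝ (Fin n → Fin n → ℝ) = n * n := by
    rw [Module.finrank_pi_fintype ℝ]
    simp [Module.finrank_fin_fun]
  rw [hdimA, hfr] at hupper
  have hle : Module.finrank ℝ ↥L ≤ n * n := by exact_mod_cast hupper
  have hge := finrank_range_evalBasis n k
  have hbig := choose_big_aux n k hk hn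
  rw [← hΦ, ← hL] at hge
  have : n^2 = n * n := sq n
  omega
end
end
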